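/- For natural numbers n ≥ k ≥ 1, the 2-adic valuation of the Stirling number of the second kind satisfies ν(S(n,k)) ≥ σ(k-1) - σ(n-1) (the shifted minimum zero estimate). -/

import Mathlib

/-- Stirling numbers of the second kind. -/
def stirling2 : ℕ → ℕ → ℕ
  | 0, 0 => 1
  | 0, _ + 1 => 0
  | _ + 1, 0 => 0
  | n + 1, k + 1 => (k + 1) * stirling2 n (k + 1) + stirling2 n k

/-- Sum of base-2 digits. -/
def sigma2 (n : ℕ) : ℕ := (Nat.digits 2 n).sum

/-- The set of powers of 2 appearing in the binary expansion of `n`. -/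
def twoPows (n : ℕ) : Finset ℕ := (Nat.bitIndices n).toFinset.image (2 ^ ·)

open Finset Nat
open scoped Nat

lemma stirling2_succ (n k : ℕ) :
    stirling2 (n+1) (k+1) = (k+1) * stirling2 n (k+1) + stirling2 n k := rfl

lemma stirling2_zero_right (n : ℕ) (hn : n ≠ 0) : stirling2 n 0 = 0 := by
  cases n with
  | zero => omega
  | succ m => rfl

lemma stirling2_eq_zero_of_lt : ∀ {n k : ℕ}, n < k → stirling2 n k = 0 := by
  intro n
  induction n with
  | zero => intro k hk; cases k with | zero => omega | succ m => rfl
  | succ m IH =>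
    intro k hk
    cases k with
    | zero => omega
    | succ j =>
      rw [stirling2_succ, IH (by omega), IH (by omega)]
      simp

lemma stirling2_pos : ∀ {n k : ℕ}, 1 ≤ k → k ≤ n → 0 < stirling2 n k := by
  intro n
  induction n with
  | zero => intro k h1 h2; omega
  | succ m IH =>
    intro k h1 h2
    cases k with
    | zero => omega
    | succ j =>
      rw [stirling2_succ]
      rcases Nat.eq_zero_or_pos j with rfl | hj
      · rcases Nat.eq_zero_or_pos m with rfl | hm
        · simp [stirling2]
        · have h := IH le_rfl hm
          have : 0 < (0+1) * stirling2 m (0+1) := by positivity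
          omega
      · have h := IH hj (by omega)
        have : 0 < stirling2 m j := IH hj (by omega)
        omega

instance : Fact (Nat.Prime 2) := ⟨Nat.prime_two⟩

lemma legendre (n : ℕ) : sigma2 n + padicValNat 2 (n !) = n := by
  have h := sub_one_mul_padicValNat_factorial (p := 2) n
  have h2 : sigma2 n ≤ n := Nat.digit_sum_le 2 n
  simp at h
  unfold sigma2 at h2 ⊢
  omega

-- key: sigma2 a + sigma2 b = sigma2 (a+b) + ν₂(C(a+b,a))
lemma sigma2_add_eq (a b : ℕ) :
    sigma2 a + sigma2 b = sigma2 (a + b) + padicValNat 2 ((a + b).choose a) := by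
  have hfact : ((a+b).choose a) * (a ! * b !) = (a+b)! := by
    have := Nat.choose_mul_factorial_mul_factorial (Nat.le_add_right a b)
    simpa [Nat.add_sub_cancel_left, mul_assoc] using this
  have hc : ((a+b).choose a) ≠ 0 := (Nat.choose_pos (Nat.le_add_right a b)).ne'
  have ha : (Nat.factorial a) ≠ 0 := (Nat.factorial_pos a).ne'
  have hb : (Nat.factorial b) ≠ 0 := (Nat.factorial_pos b).ne'
  have hv := congrArg (padicValNat 2) hfact
  rw [padicValNat.mul hc (by positivity), padicValNat.mul ha hb] at hv
  have l1 := legendre a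
  have l2 := legendre b
  have l3 := legendre (a+b)
  omega



lemma sigma2_subadd (a b : ℕ) : sigma2 (a + b) ≤ sigma2 a + sigma2 b := by
  have := sigma2_add_eq a b; omega

lemma sigma2_zero : sigma2 0 = 0 := by simp [sigma2]

lemma sigma2_one : sigma2 1 = 1 := by norm_num [sigma2]

lemma sigma2_two_mul_add (x r : ℕ) (hr : r < 2) : sigma2 (2 * x + r) = r + sigma2 x := by
  rcases Nat.eq_zero_or_pos (2 * x + r) with h | h
  · have hx : x = 0 := by omega
    have hr0 : r = 0 := by omega
    subst hx; subst hr0; simp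
  · unfold sigma2
    rw [Nat.digits_def' (by norm_num : 1 < 2) h]
    have h1 : (2 * x + r) % 2 = r := by omega
    have h2 : (2 * x + r) / 2 = x := by omega
    rw [h1, h2, List.sum_cons]

lemma sigma2_pos : ∀ {n : ℕ}, n ≠ 0 → 1 ≤ sigma2 n := by
  intro n
  induction n using Nat.strong_induction_on with
  | _ n IH =>
    intro hn
    have hd : sigma2 n = n % 2 + sigma2 (n / 2) := by
      rw [← sigma2_two_mul_add (n/2) (n%2) (by omega)]
      congr 1
      omega
    rcases Nat.eq_zero_or_pos (n % 2) with h | h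
    · have h2 : n / 2 ≠ 0 := by omega
      have := IH (n/2) (by omega) h2
      omega
    · omega

lemma sigma2_two_mul (x : ℕ) : sigma2 (2 * x) = sigma2 x := by
  simpa using sigma2_two_mul_add x 0 (by norm_num)

lemma sigma2_two_pow (a : ℕ) : sigma2 (2 ^ a) = 1 := by
  induction a with
  | zero => exact sigma2_one
  | succ b IH => rw [pow_succ, mul_comm, sigma2_two_mul, IH]

lemma sigma2_two_pow_add (a c : ℕ) (h : c < 2 ^ a) : sigma2 (2 ^ a + c) = 1 + sigma2 c := by
  induction a generalizing c with
  | zero =>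
    have : c = 0 := by omega
    subst this
    rw [sigma2_zero]; simpa using sigma2_one
  | succ b IH =>
    have hp : (2:ℕ) ^ (b+1) = 2 * 2 ^ b := by ring
    have hsplit : 2 ^ (b+1) + c = 2 * (2 ^ b + c / 2) + c % 2 := by omega
    have hlt : c / 2 < 2 ^ b := by omega
    rw [hsplit, sigma2_two_mul_add _ _ (by omega), IH _ hlt,
      show c % 2 + (1 + sigma2 (c/2)) = 1 + (c % 2 + sigma2 (c/2)) from by ring,
      ← sigma2_two_mul_add (c/2) (c%2) (by omega),
      show 2 * (c/2) + c % 2 = c from by omega]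

-- Kummer-type divisibility
lemma kummer_dvd {t c : ℕ} (h : t ≤ c) :
    2 ^ (sigma2 t + sigma2 (c - t)) ∣ 2 ^ (sigma2 c) * c.choose t := by
  have he : t + (c - t) = c := by omega
  have hkey := sigma2_add_eq t (c - t)
  rw [he] at hkey
  have hc : (c.choose t) ≠ 0 := (Nat.choose_pos h).ne'
  have hval : padicValNat 2 (2 ^ (sigma2 c) * c.choose t) = sigma2 t + sigma2 (c - t) := by
    rw [padicValNat.mul (by positivity) hc, padicValNat.prime_pow]
    omega
  rw [← hval]
  exact pow_padicValNat_dvd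

-- cancellation helper
lemma pow_two_dvd_cancel {x y s M : ℕ} (h : 2 ^ (x + s) ∣ 2 ^ (y + s) * M) : 2 ^ x ∣ 2 ^ y * M := by
  have h2 : 2 ^ s * 2 ^ x ∣ 2 ^ s * (2 ^ y * M) := by
    rw [← pow_add, ← mul_assoc, ← pow_add]
    rw [Nat.add_comm s x, Nat.add_comm s y]
    exact h
  exact (Nat.mul_dvd_mul_iff_left (by positivity : 0 < 2 ^ s)).mp h2




lemma stirling2_compose (n : ℕ) : ∀ (m k : ℕ),
    stirling2 (n + m) k =
      ∑ i ∈ range (k+1), ∑ t ∈ range (m+1),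
        stirling2 n i * m.choose t * i ^ (m - t) * stirling2 t (k - i) := by
  intro m
  induction m with
  | zero =>
    intro k
    simp only [Nat.add_zero, range_one, sum_singleton, Nat.choose_self, Nat.sub_self, pow_zero,
      mul_one, Nat.choose_zero_right]
    rw [Finset.sum_eq_single k]
    · simp [stirling2]
    · intro i hi hne
      have hik : i ≤ k := by
        simp only [mem_range] at hi; omega
      have : k - i ≠ 0 := by omega
      rcases Nat.exists_eq_succ_of_ne_zero this with ⟨j, hj⟩
      rw [hj]
      show stirling2 n i * stirling2 0 (j+1) = 0
      simp [stirling2]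
    · intro h
      exact absurd (mem_range.mpr (by omega)) h
  | succ m IH =>
    intro k
    cases k with
    | zero =>
      show stirling2 ((n + m) + 1) 0 = _
      rw [stirling2_zero_right _ (by omega)]
      symm
      apply Finset.sum_eq_zero
      intro i hi
      apply Finset.sum_eq_zero
      intro t ht
      simp only [mem_range] at hi ht
      have hi0 : i = 0 := by omega
      subst hi0
      rcases Nat.lt_succ_iff_lt_or_eq.mp ht with h | h
      · rw [zero_pow (by omega : m + 1 - t ≠ 0)]
        ring
      · subst h
        rw [stirling2_zero_right (m+1) (by omega)]
        ring
    | succ K =>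
      -- abbreviations
      have hLHS : stirling2 (n + (m+1)) (K+1)
          = (K+1) * stirling2 (n+m) (K+1) + stirling2 (n+m) K := rfl
      rw [hLHS, IH (K+1), IH K]
      -- step1 : peel t = 0 in the inner sum of the RHS
      have step1 : ∀ i : ℕ,
          (∑ t ∈ range (m+2),
            stirling2 n i * (m+1).choose t * i ^ (m+1-t) * stirling2 t (K+1-i))
          = (∑ t ∈ range (m+1),
              stirling2 n i * (m+1).choose (t+1) * i ^ (m-t) * stirling2 (t+1) (K+1-i))
            + stirling2 n i * i ^ (m+1) * stirling2 0 (K+1-i) := by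
        intro i
        rw [Finset.sum_range_succ']
        congr 1
        · apply Finset.sum_congr rfl
          intro t ht
          rw [Nat.succ_sub_succ_eq_sub]
        · simp
      -- hB : the "B part" together with the t=0 leftover equals i * (inner X sum)
      have hB : ∀ i : ℕ,
          (∑ t ∈ range (m+1),
              stirling2 n i * m.choose (t+1) * i ^ (m-t) * stirling2 (t+1) (K+1-i))
            + stirling2 n i * i ^ (m+1) * stirling2 0 (K+1-i)
          = i * (∑ t ∈ range (m+1),
              stirling2 n i * m.choose t * i ^ (m-t) * stirling2 t (K+1-i)) := by
        intro i
        conv_rhs => rw [Finset.mul_sum, Finset.sum_range_succ']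
        conv_lhs => rw [Finset.sum_range_succ]
        rw [Nat.choose_succ_self]
        simp only [Nat.mul_zero, Nat.zero_mul, Nat.mul_one, Nat.add_zero, Nat.zero_add, mul_zero, zero_mul, add_zero]
        congr 1
        · apply Finset.sum_congr rfl
          intro t ht
          simp only [mem_range] at ht
          rw [show m - t = (m - (t+1)) + 1 from by omega, pow_succ]
          ring
        · rw [Nat.choose_zero_right, Nat.sub_zero, pow_succ]
          ring
      -- recurrence in second argument, for i ≤ K
      have hA : ∀ i, i ≤ K → ∀ t : ℕ,
          stirling2 (t+1) (K+1-i) = (K+1-i) * stirling2 t (K+1-i) + stirling2 t (K-i) := by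
        intro i hi t
        have h1 : K + 1 - i = (K - i) + 1 := by omega
        rw [h1, stirling2_succ]
      -- the per-i claim
      have claim : ∀ i ∈ range (K+1),
          (∑ t ∈ range (m+1+1),
            stirling2 n i * (m+1).choose t * i ^ (m+1-t) * stirling2 t (K+1-i))
          = (K+1) * (∑ t ∈ range (m+1),
              stirling2 n i * m.choose t * i ^ (m-t) * stirling2 t (K+1-i))
            + ∑ t ∈ range (m+1),
              stirling2 n i * m.choose t * i ^ (m-t) * stirling2 t (K-i) := by
        intro i hi
        have hiK : i ≤ K := by simp only [mem_range] at hi; omega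
        rw [step1 i]
        have expand : ∑ t ∈ range (m+1),
              stirling2 n i * (m+1).choose (t+1) * i ^ (m-t) * stirling2 (t+1) (K+1-i)
            = (∑ t ∈ range (m+1),
                stirling2 n i * m.choose t * i ^ (m-t) * stirling2 (t+1) (K+1-i))
              + ∑ t ∈ range (m+1),
                stirling2 n i * m.choose (t+1) * i ^ (m-t) * stirling2 (t+1) (K+1-i) := by
          rw [← Finset.sum_add_distrib]
          apply Finset.sum_congr rfl
          intro t ht
          rw [Nat.choose_succ_succ]
          ring
        rw [expand, add_assoc, hB i]
        have hP : ∑ t ∈ range (m+1),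
              stirling2 n i * m.choose t * i ^ (m-t) * stirling2 (t+1) (K+1-i)
            = (K+1-i) * (∑ t ∈ range (m+1),
                stirling2 n i * m.choose t * i ^ (m-t) * stirling2 t (K+1-i))
              + ∑ t ∈ range (m+1),
                stirling2 n i * m.choose t * i ^ (m-t) * stirling2 t (K-i) := by
          rw [Finset.mul_sum, ← Finset.sum_add_distrib]
          apply Finset.sum_congr rfl
          intro t ht
          rw [hA i hiK t]
          ring
        rw [hP, add_right_comm, ← Nat.add_mul, Nat.sub_add_cancel (by omega : i ≤ K+1)]
      -- evaluate the i = K+1 inner sum of the RHS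
      have hlast : (∑ t ∈ range (m+1+1),
            stirling2 n (K+1) * (m+1).choose t * (K+1) ^ (m+1-t) * stirling2 t (K+1-(K+1)))
          = stirling2 n (K+1) * (K+1) ^ (m+1) := by
        rw [step1 (K+1)]
        rw [Nat.sub_self]
        have h1 : ∑ t ∈ range (m+1),
            stirling2 n (K+1) * (m+1).choose (t+1) * (K+1) ^ (m-t) * stirling2 (t+1) 0 = 0 := by
          apply Finset.sum_eq_zero
          intro t ht
          rw [stirling2_zero_right (t+1) (by omega)]
          ring
        rw [h1]
        show 0 + stirling2 n (K+1) * (K+1) ^ (m+1) * 1 = _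
        ring
      -- evaluate the i = K+1 term of the X' sum
      have hlastX : (∑ t ∈ range (m+1),
            stirling2 n (K+1) * m.choose t * (K+1) ^ (m-t) * stirling2 t (K+1-(K+1)))
          = stirling2 n (K+1) * (K+1) ^ m := by
        rw [Nat.sub_self]
        rw [Finset.sum_eq_single 0]
        · simp [stirling2]
        · intro t ht hne
          rcases Nat.exists_eq_succ_of_ne_zero hne with ⟨j, hj⟩
          subst hj
          rw [stirling2_zero_right (j+1) (by omega)]
          ring
        · intro h
          exact absurd (mem_range.mpr (by omega)) h
      -- assemble
      conv_rhs => rw [Finset.sum_range_succ]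
      rw [Finset.sum_congr rfl claim, hlast, Finset.sum_add_distrib, ← Finset.mul_sum]
      conv_lhs => rw [Finset.sum_range_succ]
      rw [hlastX, Nat.mul_add]
      ring




theorem main_dvd (n : ℕ) : ∀ k, 2 ^ sigma2 k ∣ 2 ^ sigma2 n * stirling2 n k := by
  induction n using Nat.strong_induction_on with
  | _ n IH =>
    intro k
    rcases Nat.eq_zero_or_pos n with rfl | hn
    · rcases Nat.eq_zero_or_pos k with rfl | hk
      · simp [stirling2]
      · rw [stirling2_eq_zero_of_lt (by omega)]; simp
    rcases Nat.eq_zero_or_pos k with rfl | hk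
    · rw [stirling2_zero_right n (by omega)]; simp [sigma2_zero]
    have h1 : 2 ^ Nat.log 2 n ≤ n := Nat.pow_log_le_self 2 (by omega)
    have h2 : n < 2 ^ (Nat.log 2 n + 1) := Nat.lt_pow_succ_log_self (by norm_num) n
    set a := Nat.log 2 n with ha
    have hpow : (2:ℕ) ^ (a+1) = 2 * 2 ^ a := by ring
    set c := n - 2 ^ a with hc
    have hcn : n = 2 ^ a + c := by omega
    have hclt : c < 2 ^ a := by omega
    rcases Nat.eq_zero_or_pos c with hc0 | hcpos
    · -- power of two case : n = 2 ^ a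
      have hna : n = 2 ^ a := by omega
      rcases Nat.eq_zero_or_pos a with ha0 | hapos
      · -- n = 1
        have hn1 : n = 1 := by rw [hna, ha0]; rfl
        subst hn1
        rcases Nat.lt_or_ge k 2 with hk2 | hk2
        · have hk1 : k = 1 := by omega
          subst hk1
          exact dvd_mul_right _ _
        · rw [stirling2_eq_zero_of_lt (by omega : 1 < k)]
          simp
      · -- n = 2 ^ (A+1) = 2 ^ A + 2 ^ A
        obtain ⟨A, haA⟩ : ∃ A, a = A + 1 := ⟨a - 1, by omega⟩
        rw [haA] at hna
        have hNN : n = 2 ^ A + 2 ^ A := by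
          rw [hna, pow_succ]; ring
        have hNn : 2 ^ A < n := by
          have h3 : (2:ℕ) ^ (A+1) = 2 * 2 ^ A := by ring
          have h4 : 0 < 2 ^ A := Nat.pow_pos (by norm_num)
          omega
        rw [hNN, stirling2_compose (2 ^ A) (2 ^ A) k,
          show sigma2 (2 ^ A + 2 ^ A) = 1 from by
            rw [show (2:ℕ) ^ A + 2 ^ A = 2 ^ (A+1) from by rw [pow_succ]; ring, sigma2_two_pow],
          pow_one]
        -- split off t = 2^A
        rw [Finset.sum_congr rfl
          (fun i (_ : i ∈ range (k+1)) => Finset.sum_range_succ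
            (fun t => stirling2 (2^A) i * (2^A).choose t * i ^ (2^A - t) * stirling2 t (k - i)) (2^A)),
          Finset.sum_add_distrib, Nat.mul_add]
        have D1 : ∀ i : ℕ, 2 ^ sigma2 i ∣ 2 * stirling2 (2 ^ A) i := by
          intro i
          have := IH (2 ^ A) hNn i
          rwa [sigma2_two_pow, pow_one] at this
        apply dvd_add
        · -- Part2 : t < 2^A
          rw [Finset.mul_sum]
          apply Finset.dvd_sum
          intro i hi
          rw [Finset.mul_sum]
          apply Finset.dvd_sum
          intro t ht
          simp only [mem_range] at hi ht
          have htN : t ≤ 2 ^ A := by omega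
          have D2 : 2 ^ (sigma2 t + sigma2 (2 ^ A - t)) ∣ 2 * (2 ^ A).choose t := by
            have := kummer_dvd htN
            rwa [sigma2_two_pow, pow_one] at this
          have D3 : 2 ^ sigma2 (k - i) ∣ 2 ^ sigma2 t * stirling2 t (k - i) :=
            IH t (by omega) (k - i)
          have h := mul_dvd_mul (mul_dvd_mul (D1 i) D2) D3
          have eq1 : (2:ℕ) ^ ((sigma2 i + sigma2 (k-i) + sigma2 (2^A - t)) + sigma2 t)
              = 2 ^ sigma2 i * 2 ^ (sigma2 t + sigma2 (2^A - t)) * 2 ^ sigma2 (k-i) := by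
            rw [← pow_add, ← pow_add]; congr 1; omega
          have eq2 : (2 * stirling2 (2^A) i) * (2 * (2^A).choose t) * (2 ^ sigma2 t * stirling2 t (k-i))
              = 2 ^ ((1+1) + sigma2 t) * (stirling2 (2^A) i * (2^A).choose t * stirling2 t (k-i)) := by
            rw [pow_add, pow_add, pow_one]; ring
          have h0 := (dvd_of_eq eq1).trans (h.trans (dvd_of_eq eq2))
          have h' := pow_two_dvd_cancel h0
          have hσk : sigma2 k + 1 ≤ sigma2 i + sigma2 (k-i) + sigma2 (2^A - t) := by
            have hsub := sigma2_subadd i (k - i)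
            rw [show i + (k - i) = k from by omega] at hsub
            have hpos := sigma2_pos (show 2 ^ A - t ≠ 0 by omega)
            omega
          have h'' : 2 ^ (sigma2 k + 1) ∣ 2 ^ (1+1) * (stirling2 (2^A) i * (2^A).choose t * stirling2 t (k-i)) :=
            (pow_dvd_pow 2 hσk).trans h'
          have h''' := pow_two_dvd_cancel (s := 1) h''
          rw [pow_one] at h'''
          exact (h'''.mul_right (i ^ (2^A - t))).trans (dvd_of_eq (by ring))
        · -- Part1 : t = 2^A
          have hg : ∀ i ∈ range (k+1),
              stirling2 (2^A) i * (2^A).choose (2^A) * i ^ (2^A - 2^A) * stirling2 (2^A) (k - i)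
              = stirling2 (2^A) i * stirling2 (2^A) (k - i) := by
            intro i _
            rw [Nat.choose_self, Nat.sub_self, pow_zero]
            ring
          rw [Finset.sum_congr rfl hg]
          set g : ℕ → ℕ := fun i => stirling2 (2^A) i * stirling2 (2^A) (k - i) with hgdef
          have e1 := Finset.sum_filter_add_sum_filter_not (range (k+1)) (fun i => 2*i < k) g
          have e2 := Finset.sum_filter_add_sum_filter_not
            ((range (k+1)).filter (fun i => ¬ 2*i < k)) (fun i => 2*i = k) g
          rw [Finset.filter_filter] at e2
          have hpred1 : (range (k+1)).filter (fun i => ¬ 2*i < k ∧ 2*i = k)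
              = (range (k+1)).filter (fun i => 2*i = k) := by
            apply Finset.filter_congr; intro i _; simp; omega
          have hpred2 : ((range (k+1)).filter (fun i => ¬ 2*i < k)).filter (fun i => ¬ 2*i = k)
              = (range (k+1)).filter (fun i => k < 2*i) := by
            rw [Finset.filter_filter]
            apply Finset.filter_congr; intro i _; simp; omega
          rw [hpred1, hpred2] at e2
          have e3 : ∑ i ∈ (range (k+1)).filter (fun i => k < 2*i), g i
              = ∑ i ∈ (range (k+1)).filter (fun i => 2*i < k), g i := by
            apply Finset.sum_nbij' (i := fun i => k - i) (j := fun i => k - i)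
            · intro x hx; simp only [mem_filter, mem_range] at hx ⊢; omega
            · intro x hx; simp only [mem_filter, mem_range] at hx ⊢; omega
            · intro x hx; simp only [mem_filter, mem_range] at hx; omega
            · intro x hx; simp only [mem_filter, mem_range] at hx; omega
            · intro x hx
              simp only [mem_filter, mem_range] at hx
              show g x = stirling2 (2^A) (k-x) * stirling2 (2^A) (k - (k-x))
              rw [show k - (k - x) = x from by omega]
              show stirling2 (2^A) x * stirling2 (2^A) (k-x) = _
              ring
          have etot : ∑ i ∈ range (k+1), g i
              = 2 * (∑ i ∈ (range (k+1)).filter (fun i => 2*i < k), g i)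
                + ∑ i ∈ (range (k+1)).filter (fun i => 2*i = k), g i := by
            omega
          rw [etot, Nat.mul_add]
          apply dvd_add
          · have hms : 2 * (2 * ∑ i ∈ (range (k+1)).filter (fun i => 2*i < k), g i)
                = ∑ i ∈ (range (k+1)).filter (fun i => 2*i < k), 4 * g i := by
              rw [Finset.mul_sum, Finset.mul_sum]
              apply Finset.sum_congr rfl
              intro x hx
              ring
            rw [hms]
            apply Finset.dvd_sum
            intro i hi
            simp only [mem_filter, mem_range] at hi
            have h := mul_dvd_mul (D1 i) (D1 (k - i))
            rw [← pow_add] at h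
            have hσ : sigma2 k ≤ sigma2 i + sigma2 (k - i) := by
              have hsub := sigma2_subadd i (k - i)
              rw [show i + (k - i) = k from by omega] at hsub
              omega
            refine ((pow_dvd_pow 2 hσ).trans h).trans (dvd_of_eq ?_)
            show 2 * stirling2 (2^A) i * (2 * stirling2 (2^A) (k-i)) = 4 * g i
            show _ = 4 * (stirling2 (2^A) i * stirling2 (2^A) (k - i))
            ring
          · rw [Finset.mul_sum]
            apply Finset.dvd_sum
            intro i hi
            simp only [mem_filter, mem_range] at hi
            have hik : k - i = i := by omega
            have hipos : i ≠ 0 := by omega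
            have h := mul_dvd_mul (D1 i) (D1 (k - i))
            rw [← pow_add] at h
            have hσ : sigma2 k + 1 ≤ sigma2 i + sigma2 (k - i) := by
              have hσk : sigma2 k = sigma2 i := by
                rw [show k = 2 * i from by omega, sigma2_two_mul]
              have := sigma2_pos hipos
              rw [hik]
              omega
            have h' := (pow_dvd_pow 2 hσ).trans h
            rw [show 2 * stirling2 (2^A) i * (2 * stirling2 (2^A) (k-i))
                = 2 ^ (1+1) * (stirling2 (2^A) i * stirling2 (2^A) (k-i)) from by norm_num; ring] at h'
            have h'' := pow_two_dvd_cancel (s := 1) h'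
            rw [pow_one] at h''
            exact h''
    · -- non-power case : n = 2^a + c, 0 < c < 2^a
      have hσn : sigma2 n = 1 + sigma2 c := by
        rw [hcn]; exact sigma2_two_pow_add a c hclt
      rw [hσn, hcn, stirling2_compose (2 ^ a) c k, Finset.mul_sum]
      apply Finset.dvd_sum
      intro i hi
      rw [Finset.mul_sum]
      apply Finset.dvd_sum
      intro t ht
      simp only [mem_range] at hi ht
      have htc : t ≤ c := by omega
      have D1 : 2 ^ sigma2 i ∣ 2 * stirling2 (2 ^ a) i := by
        have := IH (2 ^ a) (by omega) i
        rwa [sigma2_two_pow, pow_one] at this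
      have D2 : 2 ^ (sigma2 t + sigma2 (c - t)) ∣ 2 ^ sigma2 c * c.choose t := kummer_dvd htc
      have D3 : 2 ^ sigma2 (k - i) ∣ 2 ^ sigma2 t * stirling2 t (k - i) :=
        IH t (by omega) (k - i)
      have h := mul_dvd_mul (mul_dvd_mul D1 D2) D3
      have eq1 : (2:ℕ) ^ ((sigma2 i + sigma2 (k-i) + sigma2 (c - t)) + sigma2 t)
          = 2 ^ sigma2 i * 2 ^ (sigma2 t + sigma2 (c - t)) * 2 ^ sigma2 (k-i) := by
        rw [← pow_add, ← pow_add]; congr 1; omega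
      have eq2 : (2 * stirling2 (2^a) i) * (2 ^ sigma2 c * c.choose t) * (2 ^ sigma2 t * stirling2 t (k-i))
          = 2 ^ ((1 + sigma2 c) + sigma2 t) * (stirling2 (2^a) i * c.choose t * stirling2 t (k-i)) := by
        rw [pow_add, pow_add, pow_one]; ring
      have h0 := (dvd_of_eq eq1).trans (h.trans (dvd_of_eq eq2))
      have h' := pow_two_dvd_cancel h0
      have hσk : sigma2 k ≤ sigma2 i + sigma2 (k-i) + sigma2 (c - t) := by
        have hsub := sigma2_subadd i (k - i)
        rw [show i + (k - i) = k from by omega] at hsub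
        omega
      have final := (pow_dvd_pow 2 hσk).trans h'
      exact (final.mul_right (i ^ (c - t))).trans (dvd_of_eq (by ring))




lemma stirling2_succ_eq_sum (m k : ℕ) :
    stirling2 (m+1) (k+1) = ∑ t ∈ range (m+1), m.choose t * stirling2 t k := by
  have h := stirling2_compose 1 m (k+1)
  rw [show (1:ℕ) + m = m + 1 from by omega] at h
  rw [h, Finset.sum_eq_single 1]
  · apply Finset.sum_congr rfl
    intro t ht
    have h11 : stirling2 1 1 = 1 := rfl
    rw [h11, one_pow, Nat.add_sub_cancel]
    ring
  · intro i hi hne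
    rcases i with _ | i
    · apply Finset.sum_eq_zero
      intro t ht
      have : stirling2 1 0 = 0 := rfl
      rw [this]
      ring
    · have hz : stirling2 1 (i+1) = 0 := stirling2_eq_zero_of_lt (by omega)
      apply Finset.sum_eq_zero
      intro t ht
      rw [hz]
      ring
  · intro h1
    exact absurd (mem_range.mpr (by omega)) h1

lemma shifted_dvd (m k : ℕ) : 2 ^ sigma2 k ∣ 2 ^ sigma2 m * stirling2 (m+1) (k+1) := by
  rw [stirling2_succ_eq_sum, Finset.mul_sum]
  apply Finset.dvd_sum
  intro t ht
  simp only [mem_range] at ht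
  have htm : t ≤ m := by omega
  have D2 := kummer_dvd htm
  have D3 := main_dvd t k
  have step : 2 ^ sigma2 t ∣ 2 ^ sigma2 m * m.choose t :=
    (pow_dvd_pow 2 (Nat.le_add_right _ _)).trans D2
  exact (D3.trans (mul_dvd_mul step (dvd_refl (stirling2 t k)))).trans (dvd_of_eq (by ring))


theorem stmt_6 (n k : ℕ) (hk : 1 ≤ k) (hkn : k ≤ n) :
    (padicValNat 2 (stirling2 n k) : ℤ) ≥ (sigma2 (k - 1) : ℤ) - sigma2 (n - 1) := by
  obtain ⟨m, rfl⟩ : ∃ m, n = m + 1 := ⟨n-1, by omega⟩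
  obtain ⟨j, rfl⟩ : ∃ j, k = j + 1 := ⟨k-1, by omega⟩
  simp only [Nat.add_sub_cancel]
  have hdvd := shifted_dvd m j
  have hS : stirling2 (m+1) (j+1) ≠ 0 := (stirling2_pos (by omega) (by omega)).ne'
  have hM : 2 ^ sigma2 m * stirling2 (m+1) (j+1) ≠ 0 :=
    mul_ne_zero (by positivity) hS
  have hle : sigma2 j ≤ padicValNat 2 (2 ^ sigma2 m * stirling2 (m+1) (j+1)) :=
    (padicValNat_dvd_iff_le hM).mp hdvd
  rw [padicValNat.mul (by positivity) hS, padicValNat.prime_pow] at hle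
  omega
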